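/- arXiv:2305.04678 — 4 statements merged into one kernel-verified Lean document; each statement's English description precedes it below -/
import Mathlib

section
/- If f : X × X* → (-∞,+∞] is a convex lower semicontinuous function on a reflexive Banach space X times its dual satisfying f(x,v) ≥ ⟨v,x⟩ for all (x,v), then the contact set A_f := {(x,v) : f(x,v) = ⟨v,x⟩} is a monotone operator, i.e. for all (x,v),(y,w) ∈ A_f one has ⟨v−w, x−y⟩ ≥ 0. -/
open NormedSpace

/-- If `f : X × X* → (-∞,+∞]` is a convex lower semicontinuous function on
a (reflexive) Banach space times its dual with `f(x,v) ≥ ⟨v,x⟩`, then the contact set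
`A_f = {(x,v) : f(x,v) = ⟨v,x⟩}` is monotone. -/
theorem stmt0 {X : Type*} [NormedAddCommGroup X] [NormedSpace ℝ X] [CompleteSpace X]
    (f : X × StrongDual ℝ X → EReal)
    (hconv : ∀ z w : X × StrongDual ℝ X, ∀ a b : ℝ, 0 ≤ a → 0 ≤ b → a + b = 1 →
      f (a • z + b • w) ≤ (a : EReal) * f z + (b : EReal) * f w)
    (hlsc : LowerSemicontinuous f)
    (hge : ∀ z : X × StrongDual ℝ X, ((z.2 z.1 : ℝ) : EReal) ≤ f z) :
    ∀ z ∈ {z : X × StrongDual ℝ X | f z = ((z.2 z.1 : ℝ) : EReal)},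
      ∀ w ∈ {z : X × StrongDual ℝ X | f z = ((z.2 z.1 : ℝ) : EReal)},
        0 ≤ (z.2 - w.2) (z.1 - w.1) := by
  intro z hz w hw
  simp only [Set.mem_setOf_eq] at hz hw
  set m : X × StrongDual ℝ X := (1/2 : ℝ) • z + (1/2 : ℝ) • w with hm
  have h1 : ((m.2 m.1 : ℝ) : EReal) ≤ f m := hge m
  have h2 : f m ≤ ((1/2 : ℝ) : EReal) * f z + ((1/2 : ℝ) : EReal) * f w :=
    hconv z w (1/2) (1/2) (by norm_num) (by norm_num) (by norm_num)
  rw [hz, hw] at h2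
  have h3 : ((1/2 : ℝ) : EReal) * ((z.2 z.1 : ℝ) : EReal) + ((1/2 : ℝ) : EReal) *
      ((w.2 w.1 : ℝ) : EReal) = (((1/2 : ℝ) * (z.2 z.1) + (1/2 : ℝ) * (w.2 w.1) : ℝ) : EReal) := by
    rw [← EReal.coe_mul, ← EReal.coe_mul, ← EReal.coe_add]
  rw [h3] at h2
  have h4 : ((m.2 m.1 : ℝ) : EReal) ≤
      (((1/2 : ℝ) * (z.2 z.1) + (1/2 : ℝ) * (w.2 w.1) : ℝ) : EReal) := le_trans h1 h2
  rw [EReal.coe_le_coe_iff] at h4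
  have hmv : m.2 m.1 = (1/2 : ℝ) * ((1/2 : ℝ) * (z.2 z.1) + (1/2 : ℝ) * (z.2 w.1))
      + (1/2 : ℝ) * ((1/2 : ℝ) * (w.2 z.1) + (1/2 : ℝ) * (w.2 w.1)) := by
    simp [hm, Prod.smul_fst, Prod.smul_snd, map_add, map_smul, smul_eq_mul, mul_add]
    ring
  rw [hmv] at h4
  simp only [ContinuousLinearMap.sub_apply, map_sub]
  nlinarith [h4]
end

section
/- Let (Ω,B) be a standard Borel space with nonatomic probability measure ℙ, X a separable Banach space, p ∈ [1,∞). If μ, ν ∈ P_p(X) (Borel probability measures with finite p-th moment) and X̄ ∈ L^p(Ω,ℙ;X) satisfies X̄♯ℙ = μ, then for every ε > 0 there exists Y ∈ L^p(Ω,ℙ;X) with Y♯ℙ = ν and ‖X̄ − Y‖_{L^p} ≤ W_p(μ,ν) + ε, where W_p is the p-Wasserstein distance. -/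
open MeasureTheory Set Filter
open scoped ENNReal

/-- Quantile lemma: every probability measure on ℝ is the pushforward of the uniform
measure on (0,1) under a measurable map. -/
lemma exists_map_unif_eq (ρ : Measure ℝ) [IsProbabilityMeasure ρ] :
    ∃ Q : ℝ → ℝ, Measurable Q ∧ (volume.restrict (Ioo (0:ℝ) 1)).map Q = ρ := by
  classical
  set F : ℝ → ℝ := fun x => ProbabilityTheory.cdf ρ x with hF
  have Fmono : Monotone F := ProbabilityTheory.monotone_cdf ρ
  have F0 : Tendsto F atBot (nhds 0) := ProbabilityTheory.tendsto_cdf_atBot ρ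
  have F1 : Tendsto F atTop (nhds 1) := ProbabilityTheory.tendsto_cdf_atTop ρ
  have Fnn : ∀ x, 0 ≤ F x := fun x => ProbabilityTheory.cdf_nonneg ρ x
  have Fle1 : ∀ x, F x ≤ 1 := fun x => ProbabilityTheory.cdf_le_one ρ x
  set S : ℝ → Set ℝ := fun t => {x | t ≤ F x} with hS
  set Q : ℝ → ℝ := fun t => if t < 1 then sInf (S t) else 0 with hQ
  have hbdd : ∀ t : ℝ, 0 < t → BddBelow (S t) := by
    intro t ht
    obtain ⟨a, ha⟩ : ∃ a, F a < t := (F0.eventually_lt_const ht).exists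
    refine ⟨a, fun y hy => ?_⟩
    by_contra h
    push_neg at h
    exact absurd (hy.trans (Fmono h.le)) (not_le.2 ha)
  have hne : ∀ t : ℝ, t < 1 → (S t).Nonempty := by
    intro t ht
    obtain ⟨b, hb⟩ : ∃ b, t < F b := (F1.eventually_const_lt ht).exists
    exact ⟨b, hb.le⟩
  have hQle : ∀ t ∈ Ioo (0:ℝ) 1, ∀ x, Q t ≤ x ↔ t ≤ F x := by
    intro t ht x
    have hQt : Q t = sInf (S t) := if_pos ht.2
    constructor
    · intro h
      have h1 : t ≤ F (Q t) := by
        have hQS : ∀ z, Q t < z → t ≤ F z := by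
          intro z hz
          obtain ⟨y, hyS, hy⟩ := exists_lt_of_csInf_lt (hne _ ht.2) (hQt ▸ hz)
          exact le_trans hyS (Fmono hy.le)
        have htend : Tendsto F (nhdsWithin (Q t) (Ioi (Q t))) (nhds (F (Q t))) := by
          have h2 := (ProbabilityTheory.cdf ρ).right_continuous (Q t)
          exact h2.tendsto.mono_left (nhdsWithin_mono _ Ioi_subset_Ici_self)
        exact ge_of_tendsto htend (eventually_nhdsWithin_of_forall fun z hz => hQS z hz)
      exact h1.trans (Fmono h)
    · intro h
      rw [hQt]
      exact csInf_le (hbdd t ht.1) h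
  have measQ : Measurable Q := by
    apply measurable_of_Iic
    intro x
    have hset : Q ⁻¹' (Iic x) =
        (Ioo (0:ℝ) 1 ∩ Iic (F x)) ∪ (if (0:ℝ) ≤ x then (Ioo (0:ℝ) 1)ᶜ else ∅) := by
      ext t
      by_cases ht : t ∈ Ioo (0:ℝ) 1
      · simp only [mem_preimage, mem_Iic, mem_union, mem_inter_iff, ht, true_and]
        rw [hQle t ht x]
        constructor
        · intro h; exact Or.inl h
        · rintro (h | h)
          · exact h
          · split_ifs at h with h0
            · exact absurd ht h
            · exact absurd h (notMem_empty t)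
      · have htI : t ∉ Ioo (0:ℝ) 1 := ht
        rw [mem_Ioo, not_and_or] at ht
        have hQt : Q t = 0 := by
          rcases ht with h1 | h2
          · rw [not_lt] at h1
            have hS_univ : S t = univ := eq_univ_iff_forall.2 fun y => h1.trans (Fnn y)
            have ht1 : t < 1 := lt_of_le_of_lt h1 one_pos
            rw [hQ]
            simp only [if_pos ht1, hS_univ]
            exact Real.sInf_of_not_bddBelow not_bddBelow_univ
          · rw [not_lt] at h2
            rw [hQ]
            simp only [if_neg (not_lt.2 h2)]
        simp only [mem_preimage, mem_Iic, hQt, mem_union, mem_inter_iff, htI, false_and,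
          false_or]
        split_ifs with h0
        · simp [htI, h0]
        · simp [h0]
    rw [hset]
    refine (measurableSet_Ioo.inter measurableSet_Iic).union ?_
    split_ifs
    exacts [measurableSet_Ioo.compl, MeasurableSet.empty]
  refine ⟨Q, measQ, ?_⟩
  haveI hPU : IsProbabilityMeasure (volume.restrict (Ioo (0:ℝ) 1)) := by
    constructor
    rw [Measure.restrict_apply_univ, Real.volume_Ioo]
    norm_num
  haveI : IsProbabilityMeasure ((volume.restrict (Ioo (0:ℝ) 1)).map Q) :=
    Measure.isProbabilityMeasure_map measQ.aemeasurable
  refine Measure.ext_of_Iic _ _ (fun x => ?_)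
  rw [Measure.map_apply measQ measurableSet_Iic,
    Measure.restrict_apply (measQ measurableSet_Iic), ← ProbabilityTheory.ofReal_cdf ρ x]
  have hsub : Q ⁻¹' (Iic x) ∩ Ioo 0 1 = Ioo (0:ℝ) 1 ∩ Iic (F x) := by
    ext t
    simp only [mem_inter_iff, mem_preimage, mem_Iic]
    constructor
    · rintro ⟨h1, h2⟩; exact ⟨h2, (hQle t h2 x).1 h1⟩
    · rintro ⟨h1, h2⟩; exact ⟨(hQle t h1 x).2 h2, h1⟩
  rw [hsub]
  rcases lt_or_ge (F x) 1 with h1 | h1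
  · have : Ioo (0:ℝ) 1 ∩ Iic (F x) = Ioc 0 (F x) := by
      ext t
      simp only [mem_inter_iff, mem_Ioo, mem_Iic, mem_Ioc]
      constructor
      · rintro ⟨⟨a, b⟩, c⟩; exact ⟨a, c⟩
      · rintro ⟨a, b⟩; exact ⟨⟨a, b.trans_lt h1⟩, b⟩
    rw [this, Real.volume_Ioc]
    simp
    rfl
  · have hFx : F x = 1 := le_antisymm (Fle1 x) h1
    have : Ioo (0:ℝ) 1 ∩ Iic (F x) = Ioo 0 1 := by
      rw [hFx]
      exact inter_eq_left.2 fun t ht => ht.2.le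
    simp only [hF] at hFx
    rw [this, Real.volume_Ioo, hFx]
    norm_num

lemma map_cdf_eq_unif (ρ : Measure ℝ) [IsProbabilityMeasure ρ] [NullSingletonClass ρ] :
    ρ.map (fun x => ProbabilityTheory.cdf ρ x) = volume.restrict (Ioo (0:ℝ) 1) := by
  set F : ℝ → ℝ := fun x => ProbabilityTheory.cdf ρ x with hF
  have Fmono : Monotone F := ProbabilityTheory.monotone_cdf ρ
  have F0 : Tendsto F atBot (nhds 0) := ProbabilityTheory.tendsto_cdf_atBot ρ
  have F1 : Tendsto F atTop (nhds 1) := ProbabilityTheory.tendsto_cdf_atTop ρ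
  have Fnn : ∀ x, 0 ≤ F x := fun x => ProbabilityTheory.cdf_nonneg ρ x
  have Fle1 : ∀ x, F x ≤ 1 := fun x => ProbabilityTheory.cdf_le_one ρ x
  have measF : Measurable F := Fmono.measurable
  have Fcont : ∀ a : ℝ, Function.leftLim F a = F a := by
    intro a
    have h1 : (ProbabilityTheory.cdf ρ).measure {a} =
        ENNReal.ofReal (F a - Function.leftLim F a) :=
      StieltjesFunction.measure_singleton _ a
    rw [ProbabilityTheory.measure_cdf ρ, measure_singleton] at h1
    have h2 : F a - Function.leftLim F a ≤ 0 := by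
      by_contra h
      push_neg at h
      rw [eq_comm, ENNReal.ofReal_eq_zero] at h1
      exact absurd h1 (not_le.2 h)
    have h3 : Function.leftLim F a ≤ F a := Fmono.leftLim_le le_rfl
    linarith
  haveI : IsProbabilityMeasure (ρ.map F) := Measure.isProbabilityMeasure_map measF.aemeasurable
  haveI hPU : IsProbabilityMeasure (volume.restrict (Ioo (0:ℝ) 1)) := by
    constructor
    rw [Measure.restrict_apply_univ, Real.volume_Ioo]
    norm_num
  refine Measure.ext_of_Iic _ _ (fun t => ?_)
  rw [Measure.map_apply measF measurableSet_Iic, Measure.restrict_apply measurableSet_Iic]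
  have hAdef : F ⁻¹' (Iic t) = {x | F x ≤ t} := rfl
  rcases lt_or_ge t 0 with ht0 | ht0
  · have h1 : F ⁻¹' (Iic t) = ∅ := by
      rw [hAdef, eq_empty_iff_forall_notMem]
      intro x hx
      exact absurd (le_trans (Fnn x) hx) (not_le.2 ht0)
    have h2 : Iic t ∩ Ioo (0:ℝ) 1 = ∅ := by
      rw [eq_empty_iff_forall_notMem]
      rintro y ⟨hy1, hy2, _⟩
      exact absurd (hy1.trans ht0.le) (not_le.2 hy2)
    rw [h1, h2]
    simp
  rcases lt_or_ge t 1 with ht1 | ht1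
  · -- 0 ≤ t < 1
    have h2 : Iic t ∩ Ioo (0:ℝ) 1 = Ioc 0 t := by
      ext y
      simp only [mem_inter_iff, mem_Iic, mem_Ioo, mem_Ioc]
      constructor
      · rintro ⟨a, b, c⟩; exact ⟨b, a⟩
      · rintro ⟨a, b⟩; exact ⟨b, a, b.trans_lt ht1⟩
    rw [h2, Real.volume_Ioc, sub_zero]
    rcases eq_empty_or_nonempty (F ⁻¹' (Iic t)) with hA | hA
    · -- A empty forces t = 0
      have ht : t = 0 := by
        by_contra h
        have htpos : 0 < t := lt_of_le_of_ne ht0 (Ne.symm h)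
        obtain ⟨a, ha⟩ : ∃ a, F a < t := (F0.eventually_lt_const htpos).exists
        exact absurd (mem_preimage.2 (mem_Iic.2 ha.le))
          (eq_empty_iff_forall_notMem.1 hA a)
      rw [hA, ht]
      simp
    · have hbddA : BddAbove (F ⁻¹' (Iic t)) := by
        obtain ⟨b, hb⟩ : ∃ b, t < F b := (F1.eventually_const_lt ht1).exists
        refine ⟨b, fun y hy => ?_⟩
        by_contra h
        push_neg at h
        exact absurd ((Fmono h.le).trans (mem_Iic.1 (mem_preimage.1 hy)))
          (not_le.2 hb)
      set a := sSup (F ⁻¹' (Iic t)) with ha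
      have hstep1 : ∀ x < a, F x ≤ t := by
        intro x hx
        obtain ⟨y, hy, hxy⟩ := exists_lt_of_lt_csSup hA hx
        exact (Fmono hxy.le).trans (mem_Iic.1 (mem_preimage.1 hy))
      have hFa_le : F a ≤ t := by
        rw [← Fcont a]
        refine le_of_tendsto (Fmono.tendsto_leftLim a) ?_
        exact eventually_nhdsWithin_of_forall fun z hz => hstep1 z hz
      have hFa_ge : t ≤ F a := by
        have htend : Tendsto F (nhdsWithin a (Ioi a)) (nhds (F a)) := by
          have h2 := (ProbabilityTheory.cdf ρ).right_continuous a
          exact h2.tendsto.mono_left (nhdsWithin_mono _ Ioi_subset_Ici_self)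
        refine ge_of_tendsto htend (eventually_nhdsWithin_of_forall fun z hz => ?_)
        by_contra h
        push_neg at h
        exact absurd (le_csSup hbddA (mem_preimage.2 (mem_Iic.2 h.le))) (not_le.2 hz)
      have hFa : F a = t := le_antisymm hFa_le hFa_ge
      have hAIic : F ⁻¹' (Iic t) = Iic a := by
        ext x
        simp only [mem_preimage, mem_Iic]
        constructor
        · intro hx; exact le_csSup hbddA hx
        · intro hx; exact (Fmono hx).trans hFa_le
      rw [hAIic, ← ProbabilityTheory.ofReal_cdf ρ a]
      simp only [hF] at hFa
      rw [hFa]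
  · -- t ≥ 1
    have h1 : F ⁻¹' (Iic t) = univ := eq_univ_iff_forall.2 fun x => (Fle1 x).trans ht1
    have h2 : Iic t ∩ Ioo (0:ℝ) 1 = Ioo 0 1 :=
      inter_eq_right.2 fun y hy => hy.2.le.trans ht1
    rw [h1, h2, Real.volume_Ioo, measure_univ]
    norm_num

/-- Any probability measure on a nonempty standard Borel space is the pushforward of the
uniform measure on `(0,1)`. -/
lemma exists_map_unif_eq_sb {G : Type*} [MeasurableSpace G] [StandardBorelSpace G] [Nonempty G]
    (ρ : Measure G) [IsProbabilityMeasure ρ] :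
    ∃ f : ℝ → G, Measurable f ∧ (volume.restrict (Ioo (0:ℝ) 1)).map f = ρ := by
  classical
  obtain ⟨e, he⟩ := MeasureTheory.exists_measurableEmbedding_real G
  haveI : IsProbabilityMeasure (ρ.map e) := Measure.isProbabilityMeasure_map he.measurable.aemeasurable
  obtain ⟨Q, hQm, hQmap⟩ := exists_map_unif_eq (ρ.map e)
  set s : Set ℝ := Q ⁻¹' (range e) with hs
  have hsm : MeasurableSet s := hQm he.measurableSet_range
  set f : ℝ → G := fun t => if h : t ∈ s then rangeSplitting e ⟨Q t, h⟩ else Classical.arbitrary G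
    with hf
  have hfm : Measurable f := by
    have hsub : Measurable (fun x : s => rangeSplitting e ⟨Q (x : ℝ), x.2⟩) :=
      he.measurable_rangeSplitting.comp ((hQm.comp measurable_subtype_coe).subtype_mk)
    exact Measurable.dite hsub
      (measurable_const : Measurable fun _ : (sᶜ : Set ℝ) => Classical.arbitrary G) hsm
  refine ⟨f, hfm, ?_⟩
  have hnull : (volume.restrict (Ioo (0:ℝ) 1)) sᶜ = 0 := by
    have h1 : (ρ.map e) (range e)ᶜ = 0 := by
      rw [Measure.map_apply he.measurable he.measurableSet_range.compl]
      have : e ⁻¹' (range e)ᶜ = ∅ := by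
        rw [eq_empty_iff_forall_notMem]
        intro x hx
        exact hx (mem_range_self x)
      rw [this, measure_empty]
    rw [← hQmap, Measure.map_apply hQm he.measurableSet_range.compl] at h1
    simpa [hs, preimage_compl] using h1
  refine Measure.ext (fun A hA => ?_)
  rw [Measure.map_apply hfm hA]
  have key : f ⁻¹' A ∩ s = Q ⁻¹' (e '' A) := by
    ext t
    simp only [mem_inter_iff, mem_preimage]
    constructor
    · rintro ⟨hfA, hr⟩
      have hft : f t = rangeSplitting e ⟨Q t, hr⟩ := dif_pos hr
      have heq : e (f t) = Q t := by
        rw [hft]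
        exact apply_rangeSplitting e ⟨Q t, hr⟩
      exact ⟨f t, hfA, heq⟩
    · rintro ⟨y, hy, hye⟩
      have hr : Q t ∈ range e := ⟨y, hye⟩
      have hft : f t = rangeSplitting e ⟨Q t, hr⟩ := dif_pos hr
      have heq : e (f t) = Q t := by
        rw [hft]
        exact apply_rangeSplitting e ⟨Q t, hr⟩
      have : f t = y := he.injective (by rw [heq, hye])
      exact ⟨this ▸ hy, hr⟩
  have h2 : (volume.restrict (Ioo (0:ℝ) 1)) (f ⁻¹' A) = (volume.restrict (Ioo (0:ℝ) 1)) (f ⁻¹' A ∩ s) :=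
    (measure_inter_conull hnull).symm
  rw [h2, key, ← Measure.map_apply hQm (he.measurableSet_image.2 hA), hQmap,
    Measure.map_apply he.measurable (he.measurableSet_image.2 hA),
    he.injective.preimage_image]

/-- Transfer: from a nonatomic standard Borel probability space to any standard Borel
probability space there is a measure preserving map. -/
lemma exists_map_eq {Ω G : Type*} [MeasurableSpace Ω] [StandardBorelSpace Ω]
    [MeasurableSpace G] [StandardBorelSpace G] [Nonempty G]
    (P : Measure Ω) [IsProbabilityMeasure P] [NullSingletonClass P]
    (ρ : Measure G) [IsProbabilityMeasure ρ] :
    ∃ h : Ω → G, Measurable h ∧ P.map h = ρ := by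
  obtain ⟨e, he⟩ := MeasureTheory.exists_measurableEmbedding_real Ω
  haveI h1 : IsProbabilityMeasure (P.map e) := Measure.isProbabilityMeasure_map he.measurable.aemeasurable
  haveI h2 : NullSingletonClass (P.map e) := by
    constructor
    intro x
    rw [Measure.map_apply he.measurable (measurableSet_singleton x)]
    refine Set.Subsingleton.measure_zero ?_ P
    intro a ha b hb
    exact he.injective ((mem_preimage.1 ha).trans (mem_preimage.1 hb).symm)
  obtain ⟨f, hfm, hfmap⟩ := exists_map_unif_eq_sb ρ
  have hcdf_m : Measurable (fun x => ProbabilityTheory.cdf (P.map e) x) :=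
    (ProbabilityTheory.monotone_cdf _).measurable
  refine ⟨f ∘ (fun ω => ProbabilityTheory.cdf (P.map e) (e ω)),
    hfm.comp (hcdf_m.comp he.measurable), ?_⟩
  rw [show (fun ω => ProbabilityTheory.cdf (P.map e) (e ω))
      = (fun x => ProbabilityTheory.cdf (P.map e) x) ∘ e from rfl,
    ← Function.comp_assoc, ← Measure.map_map (hfm.comp hcdf_m) he.measurable,
    ← Measure.map_map hfm hcdf_m, map_cdf_eq_unif (P.map e), hfmap]

/-- Given `X : Ω → E` on a nonatomic standard Borel probability space and a coupling `γ`
whose first marginal is the law of `X`, there is `V : Ω → E × E` with law `γ` whose first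
coordinate is a.e. within `δ` of `X`. -/
lemma exists_close_lift {Ω E : Type*} [MeasurableSpace Ω] [StandardBorelSpace Ω]
    [NormedAddCommGroup E] [MeasurableSpace E] [BorelSpace E]
    [SecondCountableTopology E] [CompleteSpace E]
    (P : Measure Ω) [IsProbabilityMeasure P] [NullSingletonClass P]
    (X : Ω → E) (hXm : Measurable X)
    (γ : Measure (E × E)) [hγp : IsProbabilityMeasure γ]
    (hfst : γ.map Prod.fst = P.map X)
    {δ : ℝ} (hδ : 0 < δ) :
    ∃ V : Ω → E × E, Measurable V ∧ P.map V = γ ∧ ∀ᵐ ω ∂P, dist (X ω) (V ω).1 ≤ δ := by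
  classical
  haveI : NeZero γ := ⟨hγp.ne_zero⟩
  haveI hnEE : Nonempty (E × E) := Measure.nonempty_of_neZero γ
  haveI hnE : Nonempty E := ⟨hnEE.some.1⟩
  set c : ℕ → E := TopologicalSpace.denseSeq E with hc
  set D : ℕ → Set E := disjointed (fun i => Metric.ball (c i) (δ/2)) with hD
  have hDm : ∀ i, MeasurableSet (D i) :=
    MeasurableSet.disjointed (fun i => measurableSet_ball)
  have hDsub : ∀ i, D i ⊆ Metric.ball (c i) (δ/2) :=
    disjointed_subset (fun i => Metric.ball (c i) (δ/2))
  have hDdisj : Pairwise (Function.onFun Disjoint D) := disjoint_disjointed _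
  have hDcover : ∀ x : E, ∃ i, x ∈ D i := by
    intro x
    have hx : x ∈ ⋃ i, D i := by
      rw [hD, iUnion_disjointed]
      obtain ⟨i, hi⟩ := (TopologicalSpace.denseRange_denseSeq E).exists_dist_lt x
        (by linarith : (0:ℝ) < δ/2)
      exact mem_iUnion.2 ⟨i, Metric.mem_ball.2 hi⟩
    exact mem_iUnion.1 hx
  have hDuniv : (⋃ i, D i) = univ := eq_univ_iff_forall.2 fun x => mem_iUnion.2 (hDcover x)
  set T : ℕ → Set Ω := fun i => X ⁻¹' (D i) with hT
  have hTm : ∀ i, MeasurableSet (T i) := fun i => hXm (hDm i)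
  have hTdisj : Pairwise (Function.onFun Disjoint T) := fun i j h => (hDdisj h).preimage X
  have hmass : ∀ i, γ (D i ×ˢ (univ : Set E)) = P (T i) := by
    intro i
    have h1 : γ.map Prod.fst (D i) = γ (Prod.fst ⁻¹' (D i)) :=
      Measure.map_apply measurable_fst (hDm i)
    have h2 : P.map X (D i) = P (T i) := Measure.map_apply hXm (hDm i)
    rw [hfst, h2] at h1
    rw [prod_univ]
    exact h1.symm
  have hVi : ∀ i, ∃ v : Ω → E × E, Measurable v ∧
      (P.restrict (T i)).map v = γ.restrict (D i ×ˢ (univ : Set E)) := by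
    intro i
    by_cases h0 : P (T i) = 0
    · refine ⟨fun _ => (c 0, c 0), measurable_const, ?_⟩
      rw [Measure.restrict_eq_zero.2 h0, Measure.map_zero, eq_comm, Measure.restrict_eq_zero,
        hmass i]
      exact h0
    · set m := P (T i) with hm
      have hmT : m ≠ ⊤ := (measure_lt_top P _).ne
      haveI hP1 : IsProbabilityMeasure (m⁻¹ • P.restrict (T i)) := by
        constructor
        rw [Measure.smul_apply, Measure.restrict_apply_univ, smul_eq_mul,
          ENNReal.inv_mul_cancel h0 hmT]
      haveI hP2 : NullSingletonClass (m⁻¹ • P.restrict (T i)) := by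
        constructor
        intro x
        rw [Measure.smul_apply, measure_singleton, smul_eq_mul, mul_zero]
      haveI hP3 : IsProbabilityMeasure (m⁻¹ • γ.restrict (D i ×ˢ (univ : Set E))) := by
        constructor
        rw [Measure.smul_apply, Measure.restrict_apply_univ, smul_eq_mul, hmass i,
          ENNReal.inv_mul_cancel h0 hmT]
      obtain ⟨v, hvm, hvmap⟩ := exists_map_eq (m⁻¹ • P.restrict (T i))
        (m⁻¹ • γ.restrict (D i ×ˢ (univ : Set E)))
      refine ⟨v, hvm, ?_⟩
      have hPr : P.restrict (T i) = m • (m⁻¹ • P.restrict (T i)) := by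
        rw [smul_smul, ENNReal.mul_inv_cancel h0 hmT, one_smul]
      rw [hPr, Measure.map_smul, hvmap, smul_smul, ENNReal.mul_inv_cancel h0 hmT, one_smul]
  choose v hvm hvmap using hVi
  set V : Ω → E × E := fun ω => v (Nat.find (hDcover (X ω))) ω with hV
  have hVT : ∀ i, ∀ ω ∈ T i, V ω = v i ω := by
    intro i ω hω
    have h1 : X ω ∈ D (Nat.find (hDcover (X ω))) := Nat.find_spec (hDcover (X ω))
    have h2 : Nat.find (hDcover (X ω)) = i := by
      by_contra hne
      exact Set.disjoint_left.1 (hDdisj hne) h1 hω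
    simp only [hV]
    rw [h2]
  have hpre : ∀ s : Set (E × E), V ⁻¹' s = ⋃ i, T i ∩ v i ⁻¹' s := by
    intro s
    ext ω
    obtain ⟨i, hi⟩ := hDcover (X ω)
    have hωT : ω ∈ T i := hi
    simp only [mem_iUnion, mem_inter_iff, mem_preimage]
    constructor
    · intro h
      refine ⟨i, hωT, ?_⟩
      have := hVT i ω hωT
      rwa [this] at h
    · rintro ⟨j, hωj, hvj⟩
      have := hVT j ω hωj
      rw [mem_preimage] at *
      rw [this]
      exact hvj
  have hVm : Measurable V := by
    intro s hs
    rw [hpre s]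
    exact MeasurableSet.iUnion fun i => (hTm i).inter (hvm i hs)
  have keymap : P.map V = γ := by
    refine Measure.ext (fun s hs => ?_)
    rw [Measure.map_apply hVm hs, hpre s,
      measure_iUnion (fun i j h => ((hTdisj h).mono inter_subset_left inter_subset_left))
        (fun i => (hTm i).inter (hvm i hs))]
    have hterm : ∀ i, P (T i ∩ v i ⁻¹' s) = γ (s ∩ D i ×ˢ (univ : Set E)) := by
      intro i
      rw [inter_comm, ← Measure.restrict_apply (hvm i hs),
        ← Measure.map_apply (hvm i) hs, hvmap i, Measure.restrict_apply hs]
    simp_rw [hterm]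
    have hdisj2 : Pairwise (Function.onFun Disjoint fun i => s ∩ D i ×ˢ (univ : Set E)) := by
      intro i j h
      refine ((hDdisj h).preimage Prod.fst).mono ?_ ?_ <;>
        · rintro ⟨a, b⟩ ⟨-, ha, -⟩
          exact ha
    rw [← measure_iUnion hdisj2 (fun i => hs.inter ((hDm i).prod MeasurableSet.univ)),
      ← inter_iUnion, ← iUnion_prod_const, hDuniv, univ_prod_univ, inter_univ]
  refine ⟨V, hVm, keymap, ?_⟩
  have hbad : ∀ i, P (T i ∩ v i ⁻¹' ((D i ×ˢ (univ : Set E))ᶜ)) = 0 := by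
    intro i
    rw [inter_comm, ← Measure.restrict_apply (hvm i ((hDm i).prod MeasurableSet.univ).compl),
      ← Measure.map_apply (hvm i) ((hDm i).prod MeasurableSet.univ).compl, hvmap i,
      Measure.restrict_apply ((hDm i).prod MeasurableSet.univ).compl, compl_inter_self,
      measure_empty]
  have hU : P (⋃ i, T i ∩ v i ⁻¹' ((D i ×ˢ (univ : Set E))ᶜ)) = 0 :=
    measure_iUnion_null hbad
  rw [ae_iff]
  refine measure_mono_null ?_ hU
  intro ω hω
  simp only [mem_setOf_eq] at hω
  obtain ⟨i, hi⟩ := hDcover (X ω)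
  have hωT : ω ∈ T i := hi
  refine mem_iUnion.2 ⟨i, hωT, ?_⟩
  rw [mem_preimage, mem_compl_iff]
  intro hmem
  apply hω
  have hVv : V ω = v i ω := hVT i ω hωT
  have h1 : (V ω).1 ∈ Metric.ball (c i) (δ/2) := by
    apply hDsub i
    rw [hVv]
    exact (mem_prod.1 hmem).1
  have h2 : X ω ∈ Metric.ball (c i) (δ/2) := hDsub i hi
  calc dist (X ω) (V ω).1 ≤ dist (X ω) (c i) + dist (c i) (V ω).1 := dist_triangle _ _ _
  _ ≤ δ/2 + δ/2 := add_le_add (le_of_lt (Metric.mem_ball.1 h2))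
      (le_of_lt (by rw [dist_comm]; exact Metric.mem_ball.1 h1))
  _ = δ := by ring

/-- The `p`-Wasserstein distance between two Borel measures on a normed space,
defined as the infimum over couplings of the `L^p` transport cost. -/
noncomputable def Wp {E : Type*} [NormedAddCommGroup E] [MeasurableSpace E]
    (p : ℝ) (μ ν : Measure E) : ℝ :=
  sInf ((fun γ : Measure (E × E) => (∫ z, ‖z.1 - z.2‖ ^ p ∂γ) ^ (1 / p)) ''
    {γ | IsProbabilityMeasure γ ∧ γ.map Prod.fst = μ ∧ γ.map Prod.snd = ν})

/-- Given `μ, ν ∈ P_p(X)` and a random variable `X̄ ∈ L^p(Ω,ℙ;X)` with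
law `μ` on a nonatomic standard Borel probability space, for every `ε > 0` there is
`Y ∈ L^p(Ω,ℙ;X)` with law `ν` and `‖X̄ − Y‖_{L^p} ≤ W_p(μ,ν) + ε`. -/
theorem stmt12 {Ω E : Type*} [MeasurableSpace Ω] [StandardBorelSpace Ω]
    [NormedAddCommGroup E] [NormedSpace ℝ E] [CompleteSpace E]
    [SecondCountableTopology E] [MeasurableSpace E] [BorelSpace E]
    (ℙ : Measure Ω) [IsProbabilityMeasure ℙ] [NullSingletonClass ℙ]
    (p : ℝ) (hp : 1 ≤ p)
    (μ ν : Measure E) [IsProbabilityMeasure μ] [IsProbabilityMeasure ν]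
    (hμ : Integrable (fun x => ‖x‖ ^ p) μ) (hν : Integrable (fun x => ‖x‖ ^ p) ν)
    (X : Ω → E) (hX : MemLp X (ENNReal.ofReal p) ℙ) (hlaw : Measure.map X ℙ = μ) :
    ∀ ε > (0 : ℝ), ∃ Y : Ω → E, MemLp Y (ENNReal.ofReal p) ℙ ∧
      Measure.map Y ℙ = ν ∧
      (∫ ω, ‖X ω - Y ω‖ ^ p ∂ℙ) ^ (1 / p) ≤ Wp p μ ν + ε := by
  intro ε hε
  have hp0 : (0:ℝ) < p := lt_of_lt_of_le one_pos hp
  set q : ℝ≥0∞ := ENNReal.ofReal p with hq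
  have hq0 : q ≠ 0 := by
    simp only [hq, ne_eq, ENNReal.ofReal_eq_zero, not_le]
    exact hp0
  have hqT : q ≠ ⊤ := ENNReal.ofReal_ne_top
  have hqR : q.toReal = p := ENNReal.toReal_ofReal hp0.le
  have hq1 : 1 ≤ q := by
    rw [hq, ← ENNReal.ofReal_one]
    exact ENNReal.ofReal_le_ofReal hp
  -- MemLp id for measures with finite p-th moment
  have hid : ∀ (m : Measure E), IsProbabilityMeasure m →
      Integrable (fun x => ‖x‖ ^ p) m → MemLp (id : E → E) q m := by
    intro m hmP hmint
    have h := memLp_norm_rpow_iff (q := q) (p := q) (μ := m) (f := (id : E → E))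
      aestronglyMeasurable_id hq0 hqT
    rw [ENNReal.div_self hq0 hqT, memLp_one_iff_integrable] at h
    apply h.1
    simpa [hqR] using hmint
  -- choose a near-optimal coupling
  set S := ((fun γ : Measure (E × E) => (∫ z, ‖z.1 - z.2‖ ^ p ∂γ) ^ (1 / p)) ''
    {γ | IsProbabilityMeasure γ ∧ γ.map Prod.fst = μ ∧ γ.map Prod.snd = ν}) with hSdef
  have hSne : S.Nonempty := by
    refine ⟨_, ⟨μ.prod ν, ⟨inferInstance, ?_, ?_⟩, rfl⟩⟩
    · rw [Measure.map_fst_prod]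
      simp
    · rw [Measure.map_snd_prod]
      simp
  obtain ⟨w, hwS, hw⟩ := Real.lt_sInf_add_pos hSne (half_pos hε)
  obtain ⟨γ, ⟨hγp', hγ1, hγ2⟩, rfl⟩ := hwS
  haveI hγp : IsProbabilityMeasure γ := hγp'
  -- measurable representative of X
  set X' : Ω → E := hX.1.mk X with hX'
  have hX'sm : StronglyMeasurable X' := hX.1.stronglyMeasurable_mk
  have hXX' : X =ᵐ[ℙ] X' := hX.1.ae_eq_mk
  have hX'm : Measurable X' := hX'sm.measurable
  have hlaw' : Measure.map X' ℙ = μ := by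
    rw [← Measure.map_congr hXX', hlaw]
  -- the close lift
  have hfst : γ.map Prod.fst = ℙ.map X' := by rw [hγ1, hlaw']
  obtain ⟨V, hVm, hVmap, hVclose⟩ := exists_close_lift ℙ X' hX'm γ hfst (half_pos hε)
  set Y : Ω → E := fun ω => (V ω).2 with hY
  -- basic MemLp facts
  have mem1 : MemLp (fun z : E × E => z.1) q γ := by
    have h : MemLp ((id : E → E) ∘ (Prod.fst : E × E → E)) q γ := by
      rw [← memLp_map_measure_iff aestronglyMeasurable_id measurable_fst.aemeasurable, hγ1]
      exact hid μ inferInstance hμ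
    exact h
  have mem2 : MemLp (fun z : E × E => z.2) q γ := by
    have h : MemLp ((id : E → E) ∘ (Prod.snd : E × E → E)) q γ := by
      rw [← memLp_map_measure_iff aestronglyMeasurable_id measurable_snd.aemeasurable, hγ2]
      exact hid ν inferInstance hν
    exact h
  have memsub : MemLp (fun z : E × E => z.1 - z.2) q γ := mem1.sub mem2
  have memY : MemLp Y q ℙ := by
    have h : MemLp ((fun z : E × E => z.2) ∘ V) q ℙ := by
      rw [← memLp_map_measure_iff (by rw [hVmap]; exact mem2.aestronglyMeasurable)
        hVm.aemeasurable, hVmap]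
      exact mem2
    exact h
  have memV1 : MemLp (fun ω => (V ω).1) q ℙ := by
    have h : MemLp ((fun z : E × E => z.1) ∘ V) q ℙ := by
      rw [← memLp_map_measure_iff (by rw [hVmap]; exact mem1.aestronglyMeasurable)
        hVm.aemeasurable, hVmap]
      exact mem1
    exact h
  have memX' : MemLp X' q ℙ := hX.ae_eq hXX'
  have memXY : MemLp (fun ω => X' ω - Y ω) q ℙ := memX'.sub memY
  -- law of Y
  have lawY : Measure.map Y ℙ = ν := by
    have : Y = Prod.snd ∘ V := rfl
    rw [this, ← Measure.map_map measurable_snd hVm, hVmap, hγ2]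
  refine ⟨Y, memY, lawY, ?_⟩
  -- cost estimate
  set A : ℝ := ∫ ω, ‖X' ω - Y ω‖ ^ p ∂ℙ with hA
  set C : ℝ := ∫ z : E × E, ‖z.1 - z.2‖ ^ p ∂γ with hC
  have hIeq : (∫ ω, ‖X ω - Y ω‖ ^ p ∂ℙ) = A := by
    refine integral_congr_ae ?_
    filter_upwards [hXX'] with ω h
    rw [h]
  have e0 : eLpNorm (fun ω => X' ω - Y ω) q ℙ = ENNReal.ofReal (A ^ p⁻¹) := by
    have h := memXY.eLpNorm_eq_integral_rpow_norm hq0 hqT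
    rw [hqR] at h
    exact h
  have e3 : eLpNorm (fun z : E × E => z.1 - z.2) q γ = ENNReal.ofReal (C ^ p⁻¹) := by
    have h := memsub.eLpNorm_eq_integral_rpow_norm hq0 hqT
    rw [hqR] at h
    exact h
  have e2 : eLpNorm (fun ω => (V ω).1 - Y ω) q ℙ = ENNReal.ofReal (C ^ p⁻¹) := by
    have h := eLpNorm_map_measure (p := q) (g := fun z : E × E => z.1 - z.2) (f := V)
      (by rw [hVmap]; exact memsub.aestronglyMeasurable) hVm.aemeasurable
    rw [hVmap] at h
    have hcomp : (fun ω => (V ω).1 - Y ω) = (fun z : E × E => z.1 - z.2) ∘ V := rfl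
    rw [hcomp, ← h]
    exact e3
  have e1 : eLpNorm (fun ω => X' ω - (V ω).1) q ℙ ≤ ENNReal.ofReal (ε/2) := by
    have hbound : ∀ᵐ ω ∂ℙ, ‖X' ω - (V ω).1‖ ≤ ε/2 := by
      filter_upwards [hVclose] with ω h
      rwa [← dist_eq_norm]
    calc eLpNorm (fun ω => X' ω - (V ω).1) q ℙ
        ≤ ℙ univ ^ q.toReal⁻¹ * ENNReal.ofReal (ε/2) := eLpNorm_le_of_ae_bound hbound
    _ = ENNReal.ofReal (ε/2) := by
        rw [measure_univ, ENNReal.one_rpow, one_mul]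
  have tri : eLpNorm (fun ω => X' ω - Y ω) q ℙ ≤
      eLpNorm (fun ω => X' ω - (V ω).1) q ℙ + eLpNorm (fun ω => (V ω).1 - Y ω) q ℙ := by
    have hfun : (fun ω => X' ω - Y ω) =
        (fun ω => X' ω - (V ω).1) + (fun ω => (V ω).1 - Y ω) := by
      funext ω
      simp [sub_add_sub_cancel]
    rw [hfun]
    exact eLpNorm_add_le
      (memX'.aestronglyMeasurable.sub memV1.aestronglyMeasurable)
      (memV1.aestronglyMeasurable.sub memY.aestronglyMeasurable) hq1
  have hAnn : 0 ≤ A ^ p⁻¹ := by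
    apply Real.rpow_nonneg
    apply integral_nonneg
    intro ω
    positivity
  have hCnn : 0 ≤ C ^ p⁻¹ := by
    apply Real.rpow_nonneg
    apply integral_nonneg
    intro z
    positivity
  have hmain : A ^ p⁻¹ ≤ ε/2 + C ^ p⁻¹ := by
    have h := tri
    rw [e0, e2] at h
    have h2 : ENNReal.ofReal (A ^ p⁻¹) ≤ ENNReal.ofReal (ε/2 + C ^ p⁻¹) := by
      rw [ENNReal.ofReal_add (by linarith) hCnn]
      exact h.trans (add_le_add_left e1 _)
    exact (ENNReal.ofReal_le_ofReal_iff (by linarith)).1 h2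
  rw [hIeq, one_div]
  have hw' : C ^ (1/p) < sInf S + ε/2 := hw
  rw [one_div] at hw'
  have hWp : Wp p μ ν = sInf S := rfl
  linarith
end

section
/- Let (Ω,B,ℙ) be a standard Borel probability space with ℙ nonatomic, let X,X' ∈ L^p(Ω,ℙ;𝖷) and Y,Y' ∈ L^q(Ω,ℙ;𝖸) for separable Banach spaces 𝖷,𝖸 and p,q ∈ [1,∞), and suppose (X,Y)♯ℙ = (X',Y')♯ℙ. Then there exists a sequence of essentially injective measure-preserving maps g_n : Ω → Ω such that X'∘g_n → X in L^p(Ω,ℙ;𝖷) and Y'∘g_n → Y in L^q(Ω,ℙ;𝖸). -/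
open MeasureTheory Filter Topology
open Set



/-- The non-injectivity "flat endpoint" set is countable. -/
lemma flat_right_countable (ν : Measure ℝ) :
    Set.Countable {x : ℝ | x ∉ (⋃ (p : ℚ) (q : ℚ) (_ : ν (Ioo (p:ℝ) (q:ℝ)) = 0), Ioo (p:ℝ) (q:ℝ))
      ∧ ∃ y, x < y ∧ ν (Ioo x y) = 0} := by
  classical
  set U : Set ℝ := ⋃ (p : ℚ) (q : ℚ) (_ : ν (Ioo (p:ℝ) (q:ℝ)) = 0), Ioo (p:ℝ) (q:ℝ) with hU
  set E : Set ℝ := {x : ℝ | x ∉ U ∧ ∃ y, x < y ∧ ν (Ioo x y) = 0} with hE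
  have hsel : ∀ x ∈ E, ∃ q : ℚ, ∃ y : ℝ, x < (q:ℝ) ∧ (q:ℝ) < y ∧ ν (Ioo x y) = 0 := by
    rintro x ⟨-, y, hxy, hν⟩
    obtain ⟨q, hq1, hq2⟩ := exists_rat_btwn hxy
    exact ⟨q, y, hq1, hq2, hν⟩
  choose! f y hf1 hf2 hf3 using hsel
  refine Set.countable_of_injective_of_countable_image (f := f) ?_ (Set.to_countable _)
  rintro x₁ hx₁ x₂ hx₂ hfe
  by_contra hne
  -- wlog x₁ < x₂
  wlog hlt : x₁ < x₂ generalizing x₁ x₂ with H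
  · exact H hx₂ hx₁ hfe.symm (Ne.symm hne) (lt_of_le_of_ne (not_lt.mp hlt) (Ne.symm hne))
  have h1 := hf1 x₁ hx₁; have h2 := hf2 x₁ hx₁; have h3 := hf3 x₁ hx₁
  have h1' := hf1 x₂ hx₂; have h2' := hf2 x₂ hx₂
  rw [hfe] at h1 h2
  -- x₂ ∈ Ioo x₁ (y x₁), a ν-null open interval
  have hx₂mem : x₂ ∈ Ioo x₁ (y x₁) := ⟨hlt, lt_trans h1' h2⟩
  obtain ⟨p, hp1, hp2⟩ := exists_rat_btwn hlt
  obtain ⟨r, hr1, hr2⟩ := exists_rat_btwn hx₂mem.2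
  have hsub : Ioo (p:ℝ) (r:ℝ) ⊆ Ioo x₁ (y x₁) :=
    Ioo_subset_Ioo hp1.le hr2.le
  have hnull : ν (Ioo (p:ℝ) (r:ℝ)) = 0 := le_antisymm (le_trans (measure_mono hsub) h3.le) (zero_le)
  have : x₂ ∈ U := by
    refine Set.mem_iUnion.2 ⟨p, Set.mem_iUnion.2 ⟨r, Set.mem_iUnion.2 ⟨hnull, hp2, hr1⟩⟩⟩
  exact hx₂.1 this

lemma flat_left_countable (ν : Measure ℝ) :
    Set.Countable {x : ℝ | x ∉ (⋃ (p : ℚ) (q : ℚ) (_ : ν (Ioo (p:ℝ) (q:ℝ)) = 0), Ioo (p:ℝ) (q:ℝ))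
      ∧ ∃ y, y < x ∧ ν (Ioo y x) = 0} := by
  classical
  set U : Set ℝ := ⋃ (p : ℚ) (q : ℚ) (_ : ν (Ioo (p:ℝ) (q:ℝ)) = 0), Ioo (p:ℝ) (q:ℝ) with hU
  set E : Set ℝ := {x : ℝ | x ∉ U ∧ ∃ y, y < x ∧ ν (Ioo y x) = 0} with hE
  have hsel : ∀ x ∈ E, ∃ q : ℚ, ∃ y : ℝ, y < (q:ℝ) ∧ (q:ℝ) < x ∧ ν (Ioo y x) = 0 := by
    rintro x ⟨-, y, hxy, hν⟩
    obtain ⟨q, hq1, hq2⟩ := exists_rat_btwn hxy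
    exact ⟨q, y, hq1, hq2, hν⟩
  choose! f y hf1 hf2 hf3 using hsel
  refine Set.countable_of_injective_of_countable_image (f := f) ?_ (Set.to_countable _)
  rintro x₁ hx₁ x₂ hx₂ hfe
  by_contra hne
  wlog hlt : x₂ < x₁ generalizing x₁ x₂ with H
  · exact H hx₂ hx₁ hfe.symm (Ne.symm hne) (lt_of_le_of_ne (not_lt.mp hlt) hne)
  have h1 := hf1 x₁ hx₁; have h2 := hf2 x₁ hx₁; have h3 := hf3 x₁ hx₁
  have h2' := hf2 x₂ hx₂
  rw [hfe] at h1 h2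
  have hx₂mem : x₂ ∈ Ioo (y x₁) x₁ := ⟨lt_trans h1 h2', hlt⟩
  obtain ⟨p, hp1, hp2⟩ := exists_rat_btwn hx₂mem.1
  obtain ⟨r, hr1, hr2⟩ := exists_rat_btwn hlt
  have hsub : Ioo (p:ℝ) (r:ℝ) ⊆ Ioo (y x₁) x₁ := Ioo_subset_Ioo hp1.le hr2.le
  have hnull : ν (Ioo (p:ℝ) (r:ℝ)) = 0 :=
    le_antisymm (le_trans (measure_mono hsub) h3.le) (zero_le)
  exact hx₂.1 (Set.mem_iUnion.2 ⟨p, Set.mem_iUnion.2 ⟨r, Set.mem_iUnion.2 ⟨hnull, hp2, hr1⟩⟩⟩)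

/-- The "essential injectivity" set for a nonatomic finite measure on ℝ: a conull measurable
set on which any cdf-like function is injective. -/
lemma exists_conull_inj_set (ν : Measure ℝ) [NullSingletonClass ν] :
    ∃ G : Set ℝ, MeasurableSet G ∧ ν Gᶜ = 0 ∧
      ∀ x ∈ G, ∀ z ∈ G, x < z → ν (Ioo x z) ≠ 0 := by
  classical
  set U : Set ℝ := ⋃ (p : ℚ) (q : ℚ) (_ : ν (Ioo (p:ℝ) (q:ℝ)) = 0), Ioo (p:ℝ) (q:ℝ) with hU
  set Ep : Set ℝ := {x : ℝ | x ∉ U ∧ ∃ y, x < y ∧ ν (Ioo x y) = 0} with hEp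
  set Em : Set ℝ := {x : ℝ | x ∉ U ∧ ∃ y, y < x ∧ ν (Ioo y x) = 0} with hEm
  have hUmeas : MeasurableSet U := by
    refine MeasurableSet.iUnion fun p => MeasurableSet.iUnion fun q =>
      MeasurableSet.iUnion fun _ => measurableSet_Ioo
  have hUnull : ν U = 0 := by
    refine measure_iUnion_null fun p => measure_iUnion_null fun q => measure_iUnion_null fun h => h
  have hEpc : Set.Countable Ep := flat_right_countable ν
  have hEmc : Set.Countable Em := flat_left_countable ν
  refine ⟨(U ∪ Ep ∪ Em)ᶜ, ?_, ?_, ?_⟩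
  · exact (((hUmeas.union hEpc.measurableSet).union hEmc.measurableSet)).compl
  · rw [compl_compl]
    refine measure_union_null (measure_union_null hUnull (hEpc.measure_zero ν)) (hEmc.measure_zero ν)
  · intro x hx z hz hlt hnull
    have hxU : x ∉ U := fun h => hx (Or.inl (Or.inl h))
    exact hx (Or.inl (Or.inr ⟨hxU, z, hlt, hnull⟩))

open ProbabilityTheory in
/-- CDF transport: a nonatomic finite measure on ℝ is pushed to Lebesgue measure on an
interval by its cdf, which is moreover injective off a null set. -/
lemma exists_cdf_map (ν : Measure ℝ) [IsFiniteMeasure ν] [NullSingletonClass ν] :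
    ∃ F : ℝ → ℝ, Measurable F ∧
      ν.map F = volume.restrict (Ioc (0:ℝ) (ν univ).toReal) ∧
      ∃ G : Set ℝ, MeasurableSet G ∧ ν Gᶜ = 0 ∧ Set.InjOn F G := by
  classical
  by_cases hν : ν = 0
  · refine ⟨id, measurable_id, ?_, univ, MeasurableSet.univ, by simp [hν], Set.injOn_id _⟩
    subst hν
    simp [Measure.map_id]
  have hm0 : ν univ ≠ 0 := by simpa [Measure.measure_univ_eq_zero] using hν
  have hmtop : ν univ ≠ ⊤ := measure_ne_top ν univ
  set P : Measure ℝ := (ν univ)⁻¹ • ν with hP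
  haveI : IsProbabilityMeasure P := by
    constructor
    simp [hP, Measure.smul_apply, smul_eq_mul, ENNReal.inv_mul_cancel hm0 hmtop]
  haveI : NullSingletonClass P := by
    constructor
    intro x
    simp [hP, Measure.smul_apply, measure_singleton]
  set m' : ℝ := (ν univ).toReal with hm'def
  have hm' : 0 < m' := ENNReal.toReal_pos hm0 hmtop
  set F : ℝ → ℝ := fun x => m' * cdf P x with hF
  have hofReal : ∀ x, ENNReal.ofReal (F x) = ν (Iic x) := by
    intro x
    rw [hF]
    rw [ENNReal.ofReal_mul hm'.le, ofReal_cdf, hm'def, ENNReal.ofReal_toReal hmtop, hP,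
      Measure.smul_apply, smul_eq_mul, ← mul_assoc, ENNReal.mul_inv_cancel hm0 hmtop, one_mul]
  have hFmono : Monotone F := fun x y hxy =>
    mul_le_mul_of_nonneg_left (monotone_cdf P hxy) hm'.le
  -- continuity of the cdf of a nonatomic measure
  have hcdfcont : Continuous (cdf P) := by
    rw [continuous_iff_continuousAt]
    intro x
    have hsing : (cdf P).measure {x} = 0 := by rw [measure_cdf]; exact measure_singleton x
    rw [StieltjesFunction.measure_singleton] at hsing
    have hle : Function.leftLim (cdf P) x ≤ cdf P x := (monotone_cdf P).leftLim_le le_rfl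
    have hge : cdf P x ≤ Function.leftLim (cdf P) x := by
      by_contra h
      push_neg at h
      have : (0:ℝ) < cdf P x - Function.leftLim (cdf P) x := sub_pos.mpr h
      rw [ENNReal.ofReal_eq_zero] at hsing
      linarith
    have hleft : Function.leftLim (cdf P) x = cdf P x := le_antisymm hle hge
    have hright : Function.rightLim (cdf P) x = cdf P x :=
      (monotone_cdf P).continuousWithinAt_Ioi_iff_rightLim_eq.mp
        (((cdf P).right_continuous x).mono Ioi_subset_Ici_self)
    exact (monotone_cdf P).continuousAt_iff_leftLim_eq_rightLim.mpr (hleft.trans hright.symm)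
  have hFcont : Continuous F := continuous_const.mul hcdfcont
  have hFmeas : Measurable F := hFcont.measurable
  have hF0 : ∀ x, 0 ≤ F x := fun x => mul_nonneg hm'.le (cdf_nonneg P x)
  have hFm : ∀ x, F x ≤ m' := fun x => mul_le_of_le_one_right hm'.le (cdf_le_one P x)
  have hFbot : Tendsto F atBot (𝓝 0) := by
    have := (tendsto_cdf_atBot P).const_mul m'
    simpa using this
  have hFtop : Tendsto F atTop (𝓝 m') := by
    have := (tendsto_cdf_atTop P).const_mul m'
    simpa using this
  have hmap : ν.map F = volume.restrict (Ioc (0:ℝ) m') := by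
    haveI := ν.isFiniteMeasure_map F
    refine Measure.ext_of_Iic (ν.map F) _ (fun t => ?_)
    rw [Measure.map_apply hFmeas measurableSet_Iic, Measure.restrict_apply measurableSet_Iic]
    set A : Set ℝ := F ⁻¹' Iic t with hA
    rcases eq_empty_or_nonempty A with hAe | hAne
    · have ht0 : t ≤ 0 := by
        refine ge_of_tendsto hFbot (Eventually.of_forall fun x => ?_)
        by_contra h
        push_neg at h
        exact (eq_empty_iff_forall_notMem.mp hAe x) (mem_preimage.mpr (le_of_lt h))
      have : Iic t ∩ Ioc 0 m' = ∅ := by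
        ext x; simp only [mem_inter_iff, mem_Iic, mem_Ioc, mem_empty_iff_false, iff_false]
        rintro ⟨h1, h2, -⟩; linarith
      rw [hAe, this]; simp
    by_cases hAu : A = univ
    · have htm : m' ≤ t := by
        refine le_of_tendsto hFtop (Eventually.of_forall fun x => ?_)
        have : x ∈ A := hAu ▸ mem_univ x
        exact this
      have : Iic t ∩ Ioc 0 m' = Ioc 0 m' := by
        refine inter_eq_right.mpr fun x hx => le_trans hx.2 htm
      rw [hAu, this, Real.volume_Ioc]
      simp [hm'def, ENNReal.ofReal_toReal hmtop]
    · have hAc : Aᶜ.Nonempty := nonempty_compl.mpr hAu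
      -- A is a proper nonempty closed lower set, hence Iic a with F a = t
      have hAclosed : IsClosed A := isClosed_Iic.preimage hFcont
      have hAbdd : BddAbove A := by
        by_contra hbdd
        obtain ⟨z, hz⟩ := hAc
        obtain ⟨w, hw, hzw⟩ := not_bddAbove_iff.mp hbdd z
        exact hz (mem_preimage.mpr (le_trans (hFmono hzw.le) hw))
      set a : ℝ := sSup A with ha
      have haA : a ∈ A := hAclosed.csSup_mem hAne hAbdd
      have hAIic : A = Iic a := by
        ext x
        constructor
        · exact fun hx => le_csSup hAbdd hx
        · exact fun hx => mem_preimage.mpr (le_trans (hFmono hx) haA)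
      have hFat : F a = t := by
        refine le_antisymm haA ?_
        by_contra h
        push_neg at h
        have hopen : IsOpen {x | F x < t} := isOpen_lt hFcont continuous_const
        obtain ⟨ε, hε, hball⟩ := Metric.isOpen_iff.mp hopen a h
        have hmemball : a + ε / 2 ∈ Metric.ball a ε := by
          rw [Metric.mem_ball, Real.dist_eq]
          rw [abs_of_nonneg (by linarith)]
          linarith
        have hblt : F (a + ε / 2) < t := hball hmemball
        have : a + ε / 2 ∈ A := mem_preimage.mpr (le_of_lt hblt)
        have := le_csSup hAbdd this
        linarith
      have ht0 : 0 ≤ t := hFat ▸ hF0 a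
      have htm : t ≤ m' := hFat ▸ hFm a
      have : Iic t ∩ Ioc 0 m' = Ioc 0 t := by
        ext x
        simp only [mem_inter_iff, mem_Iic, mem_Ioc]
        constructor
        · rintro ⟨h1, h2, h3⟩; exact ⟨h2, h1⟩
        · rintro ⟨h1, h2⟩; exact ⟨h2, h1, le_trans h2 htm⟩
      rw [hAIic, this, Real.volume_Ioc, ← hofReal a, hFat]
      simp
  obtain ⟨G, hGmeas, hGnull, hGinj⟩ := exists_conull_inj_set ν
  refine ⟨F, hFmeas, hmap, G, hGmeas, hGnull, ?_⟩
  intro x hx z hz hxz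
  by_contra hne
  wlog hlt : x < z generalizing x z with H
  · exact H hz hx hxz.symm (Ne.symm hne) (lt_of_le_of_ne (not_lt.mp hlt) (Ne.symm hne))
  have hIoc : ν (Iic x) + ν (Ioc x z) = ν (Iic z) := by
    rw [← measure_union (Iic_disjoint_Ioc le_rfl) measurableSet_Ioc, Iic_union_Ioc_eq_Iic hlt.le]
  rw [← hofReal, ← hofReal, hxz] at hIoc
  have hIoc0 : ν (Ioc x z) = 0 := by
    have h := hIoc
    nth_rewrite 2 [← add_zero (ENNReal.ofReal (F z))] at h
    exact (ENNReal.add_right_inj ENNReal.ofReal_ne_top).mp h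
  exact hGinj x hx z hz hlt (measure_mono_null Ioo_subset_Ioc_self hIoc0)

/-- Transport between two equal-measure pieces of a nonatomic standard Borel measure space,
by an essentially injective measure-preserving map. -/
lemma exists_piece_map {Ω : Type*} [MeasurableSpace Ω] [StandardBorelSpace Ω] [Nonempty Ω]
    (ℙ : Measure Ω) [IsFiniteMeasure ℙ] [NullSingletonClass ℙ] {A A' : Set Ω}
    (hA : MeasurableSet A) (hA' : MeasurableSet A') (hmm : ℙ A = ℙ A') :
    ∃ f : Ω → Ω, Measurable f ∧ (ℙ.restrict A).map f = ℙ.restrict A' ∧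
      ∃ S : Set Ω, MeasurableSet S ∧ S ⊆ A ∧ ℙ (A \ S) = 0 ∧ Set.InjOn f S ∧
        ∀ ω ∈ S, f ω ∈ A' := by
  classical
  set e : Ω → ℝ := embeddingReal Ω with he_def
  have he : MeasurableEmbedding e := measurableEmbedding_embeddingReal Ω
  set ν : Measure ℝ := (ℙ.restrict A).map e with hν_def
  set ν' : Measure ℝ := (ℙ.restrict A').map e with hν'_def
  haveI : IsFiniteMeasure ν := (ℙ.restrict A).isFiniteMeasure_map e
  haveI : IsFiniteMeasure ν' := (ℙ.restrict A').isFiniteMeasure_map e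
  have hNullSingletonClass : ∀ (t : Set Ω), NullSingletonClass ((ℙ.restrict t).map e) := by
    intro t
    constructor
    intro x
    rw [Measure.map_apply he.measurable (measurableSet_singleton x)]
    have hsub : (e ⁻¹' {x}).Subsingleton := fun a ha b hb => he.injective (ha.trans hb.symm)
    exact le_antisymm ((Measure.restrict_apply_le _ _).trans (hsub.measure_zero ℙ).le) (zero_le)
  haveI : NullSingletonClass ν := hNullSingletonClass A
  haveI : NullSingletonClass ν' := hNullSingletonClass A'
  have hνuniv : ν univ = ℙ A := by
    rw [hν_def, Measure.map_apply he.measurable MeasurableSet.univ, preimage_univ,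
      Measure.restrict_apply_univ]
  have hν'univ : ν' univ = ℙ A' := by
    rw [hν'_def, Measure.map_apply he.measurable MeasurableSet.univ, preimage_univ,
      Measure.restrict_apply_univ]
  set m' : ℝ := (ν univ).toReal with hm'_def
  have hν'm : (ν' univ).toReal = m' := by rw [hν'univ, ← hmm, ← hνuniv]
  obtain ⟨F, hFmeas, hFmap, G, hGmeas, hGnull, hGinj⟩ := exists_cdf_map ν
  obtain ⟨F', hF'meas, hF'map, G', hG'meas, hG'null, hG'inj⟩ := exists_cdf_map ν'
  rw [hν'm] at hF'map
  set φ : Ω → ℝ := F ∘ e with hφ_def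
  set ψ : Ω → ℝ := F' ∘ e with hψ_def
  have hφmeas : Measurable φ := hFmeas.comp he.measurable
  have hψmeas : Measurable ψ := hF'meas.comp he.measurable
  have hφmap : (ℙ.restrict A).map φ = volume.restrict (Ioc 0 m') := by
    rw [hφ_def, ← Measure.map_map hFmeas he.measurable, ← hν_def, hFmap]
  have hψmap : (ℙ.restrict A').map ψ = volume.restrict (Ioc 0 m') := by
    rw [hψ_def, ← Measure.map_map hF'meas he.measurable, ← hν'_def, hF'map]
  set B' : Set Ω := A' ∩ e ⁻¹' G' with hB'_def
  have hB'meas : MeasurableSet B' := hA'.inter (he.measurable hG'meas)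
  have hB'null : ℙ (A' \ B') = 0 := by
    have : A' \ B' ⊆ e ⁻¹' G'ᶜ ∩ A' := by
      rintro ω ⟨h1, h2⟩
      exact ⟨fun hc => h2 ⟨h1, hc⟩, h1⟩
    refine measure_mono_null this ?_
    rw [← Measure.restrict_apply (he.measurable hG'meas.compl), ← Measure.map_apply he.measurable
      hG'meas.compl, ← hν'_def]
    exact hG'null
  -- the restriction of ψ to B' is a measurable embedding
  haveI : StandardBorelSpace B' := hB'meas.standardBorel
  set h : B' → ℝ := fun b => ψ (b : Ω) with hh_def
  have hhmeas : Measurable h := hψmeas.comp measurable_subtype_coe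
  have hhinj : Function.Injective h := by
    rintro ⟨b₁, hb₁⟩ ⟨b₂, hb₂⟩ hb
    have : F' (e b₁) = F' (e b₂) := hb
    have := hG'inj hb₁.2 hb₂.2 this
    exact Subtype.ext (he.injective this)
  have hemb : MeasurableEmbedding h := hhmeas.measurableEmbedding hhinj
  have hImeas : MeasurableSet (Set.range h) := hemb.measurableSet_range
  set τ : ℝ → Ω := fun t => if ht : t ∈ Set.range h then ((Set.rangeSplitting h ⟨t, ht⟩ : B') : Ω)
    else Classical.arbitrary Ω with hτ_def
  have hτmeas : Measurable τ := by
    exact Measurable.dite (f := fun x : (Set.range h : Set ℝ) => ((Set.rangeSplitting h x : B') : Ω))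
      (measurable_subtype_coe.comp hemb.measurable_rangeSplitting)
      (g := fun _ => Classical.arbitrary Ω) measurable_const hImeas
  have hτI : ∀ t (ht : t ∈ (Set.range h)), τ t ∈ B' ∧ ψ (τ t) = t := by
    intro t ht
    have : τ t = ((Set.rangeSplitting h ⟨t, ht⟩ : B') : Ω) := dif_pos ht
    rw [this]
    refine ⟨(Set.rangeSplitting h ⟨t, ht⟩).2, ?_⟩
    exact Set.apply_rangeSplitting h ⟨t, ht⟩
  have hτψ : ∀ ω ∈ B', τ (ψ ω) = ω := by
    intro ω hω
    have hmem : ψ ω ∈ Set.range h := Set.mem_range_self (⟨ω, hω⟩ : B')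
    have h1 := (hτI _ hmem).2
    have h2 := (hτI _ hmem).1
    have : h ⟨τ (ψ ω), h2⟩ = h ⟨ω, hω⟩ := h1
    exact congrArg Subtype.val (hhinj this)
  have hτmap : (volume.restrict (Ioc 0 m')).map τ = ℙ.restrict A' := by
    rw [← hψmap, Measure.map_map hτmeas hψmeas]
    have hcong : (τ ∘ ψ) =ᵐ[ℙ.restrict A'] id := by
      have hsub : {ω | ¬ (τ ∘ ψ) ω = id ω} ⊆ B'ᶜ := by
        intro ω hω hB
        exact hω (hτψ ω hB)
      refine measure_mono_null hsub ?_
      have : (ℙ.restrict A') B'ᶜ = ℙ (B'ᶜ ∩ A') := Measure.restrict_apply hB'meas.compl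
      rw [this]
      refine measure_mono_null ?_ hB'null
      exact fun ω hω => ⟨hω.2, hω.1⟩
    rw [Measure.map_congr hcong, Measure.map_id]
  refine ⟨τ ∘ φ, hτmeas.comp hφmeas, ?_, ?_⟩
  · rw [← Measure.map_map hτmeas hφmeas, hφmap, hτmap]
  set B : Set Ω := A ∩ e ⁻¹' G with hB_def
  have hBmeas : MeasurableSet B := hA.inter (he.measurable hGmeas)
  have hBnull : ℙ (A \ B) = 0 := by
    have : A \ B ⊆ e ⁻¹' Gᶜ ∩ A := by
      rintro ω ⟨h1, h2⟩
      exact ⟨fun hc => h2 ⟨h1, hc⟩, h1⟩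
    refine measure_mono_null this ?_
    rw [← Measure.restrict_apply (he.measurable hGmeas.compl), ← Measure.map_apply he.measurable
      hGmeas.compl, ← hν_def]
    exact hGnull
  refine ⟨B ∩ φ ⁻¹' (Set.range h), hBmeas.inter (hφmeas hImeas), fun ω hω => hω.1.1, ?_, ?_, ?_⟩
  · have hsub : A \ (B ∩ φ ⁻¹' (Set.range h)) ⊆ (A \ B) ∪ (φ ⁻¹' (Set.range h)ᶜ ∩ A) := by
      rintro ω ⟨h1, h2⟩
      by_cases hB : ω ∈ B
      · exact Or.inr ⟨fun hc => h2 ⟨hB, hc⟩, h1⟩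
      · exact Or.inl ⟨h1, hB⟩
    refine measure_mono_null hsub (measure_union_null hBnull ?_)
    have e1 : ℙ (φ ⁻¹' (Set.range h)ᶜ ∩ A) = (ℙ.restrict A) (φ ⁻¹' (Set.range h)ᶜ) :=
      (Measure.restrict_apply (hφmeas hImeas.compl)).symm
    have e2 : (ℙ.restrict A) (φ ⁻¹' (Set.range h)ᶜ) = ((ℙ.restrict A).map φ) (Set.range h)ᶜ :=
      (Measure.map_apply hφmeas hImeas.compl).symm
    rw [e1, e2, hφmap, ← hψmap, Measure.map_apply hψmeas hImeas.compl]
    have hsub2 : ψ ⁻¹' (Set.range h)ᶜ ⊆ B'ᶜ := by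
      intro ω hω hB
      exact hω (Set.mem_range_self (⟨ω, hB⟩ : B'))
    refine measure_mono_null hsub2 ?_
    rw [Measure.restrict_apply hB'meas.compl]
    refine measure_mono_null ?_ hB'null
    exact fun ω hω => ⟨hω.2, hω.1⟩
  · rintro x ⟨hxB, hxI⟩ y ⟨hyB, hyI⟩ hxy
    have h1 : ψ (τ (φ x)) = φ x := (hτI _ hxI).2
    have h2 : ψ (τ (φ y)) = φ y := (hτI _ hyI).2
    have hφeq : φ x = φ y := by
      rw [← h1, ← h2]
      exact congrArg ψ hxy
    have : F (e x) = F (e y) := hφeq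
    exact he.injective (hGinj hxB.2 hyB.2 this)
  · rintro ω ⟨hωB, hωI⟩
    exact (hτI _ hωI).1.1

/-- Glue piecewise transport maps over countable partitions into a global essentially injective
measure-preserving map. -/
lemma exists_glue {Ω : Type*} [MeasurableSpace Ω] [StandardBorelSpace Ω] [Nonempty Ω]
    (ℙ : Measure Ω) [IsFiniteMeasure ℙ] [NullSingletonClass ℙ] (A A' : ℕ → Set Ω)
    (hA : ∀ k, MeasurableSet (A k)) (hA' : ∀ k, MeasurableSet (A' k))
    (hdisj : Pairwise (Function.onFun Disjoint A)) (hdisj' : Pairwise (Function.onFun Disjoint A'))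
    (hcov : ⋃ k, A k = univ) (hcov' : ⋃ k, A' k = univ)
    (hmm : ∀ k, ℙ (A k) = ℙ (A' k)) :
    ∃ g : Ω → Ω, Measurable g ∧ ℙ.map g = ℙ ∧
      ∃ S : Set Ω, MeasurableSet S ∧ ℙ Sᶜ = 0 ∧ Set.InjOn g S ∧
        ∀ k, ∀ ω ∈ A k ∩ S, g ω ∈ A' k := by
  classical
  choose f hfmeas hfmap S hSmeas hSsub hSnull hSinj hSmem using
    fun k => exists_piece_map ℙ (hA k) (hA' k) (hmm k)
  have hcovω : ∀ ω : Ω, ∃ k, ω ∈ A k := fun ω => mem_iUnion.mp (hcov ▸ mem_univ ω)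
  set κ : Ω → ℕ := fun ω => Nat.find (hcovω ω) with hκ_def
  have hκ : ∀ ω, ω ∈ A (κ ω) := fun ω => Nat.find_spec (hcovω ω)
  have hκu : ∀ ω k, ω ∈ A k → κ ω = k := by
    intro ω k hk
    by_contra hne
    exact Set.disjoint_left.mp (hdisj hne) (hκ ω) hk
  set g : Ω → Ω := fun ω => f (κ ω) ω with hg_def
  have hgA : ∀ k, ∀ ω ∈ A k, g ω = f k ω := fun k ω hk => by simp only [hg_def]; rw [hκu ω k hk]
  have hpre : ∀ V : Set Ω, g ⁻¹' V = ⋃ k, A k ∩ f k ⁻¹' V := by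
    intro V
    ext ω
    simp only [mem_preimage, mem_iUnion, mem_inter_iff]
    constructor
    · intro hω
      exact ⟨κ ω, hκ ω, by rwa [← hgA (κ ω) ω (hκ ω)]⟩
    · rintro ⟨k, hk, hfk⟩
      rwa [hgA k ω hk]
  have hgmeas : Measurable g := by
    intro V hV
    rw [hpre]
    exact MeasurableSet.iUnion fun k => (hA k).inter (hfmeas k hV)
  have hterm : ∀ (V : Set Ω), MeasurableSet V → ∀ k, ℙ (A k ∩ f k ⁻¹' V) = ℙ (V ∩ A' k) := by
    intro V hV k
    have e1 : ℙ (A k ∩ f k ⁻¹' V) = (ℙ.restrict (A k)) (f k ⁻¹' V) := by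
      rw [Measure.restrict_apply (hfmeas k hV), inter_comm]
    have e2 : (ℙ.restrict (A k)) (f k ⁻¹' V) = ((ℙ.restrict (A k)).map (f k)) V :=
      (Measure.map_apply (hfmeas k) hV).symm
    rw [e1, e2, hfmap k, Measure.restrict_apply hV]
  have hgmap : ℙ.map g = ℙ := by
    refine Measure.ext fun V hV => ?_
    rw [Measure.map_apply hgmeas hV, hpre]
    have hd1 : Pairwise (Function.onFun Disjoint (fun k => A k ∩ f k ⁻¹' V)) :=
      fun i j hne => ((hdisj hne).mono inter_subset_left inter_subset_left)
    have hd2 : Pairwise (Function.onFun Disjoint (fun k => V ∩ A' k)) :=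
      fun i j hne => ((hdisj' hne).mono inter_subset_right inter_subset_right)
    calc ℙ (⋃ k, A k ∩ f k ⁻¹' V) = ∑' k, ℙ (A k ∩ f k ⁻¹' V) :=
          measure_iUnion hd1 fun k => (hA k).inter (hfmeas k hV)
      _ = ∑' k, ℙ (V ∩ A' k) := by exact tsum_congr fun k => hterm V hV k
      _ = ℙ (⋃ k, V ∩ A' k) := (measure_iUnion hd2 fun k => hV.inter (hA' k)).symm
      _ = ℙ V := by rw [← inter_iUnion, hcov', inter_univ]
  refine ⟨g, hgmeas, hgmap, ⋃ k, S k, MeasurableSet.iUnion hSmeas, ?_, ?_, ?_⟩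
  · have hsub : (⋃ k, S k)ᶜ ⊆ ⋃ k, A k \ S k := by
      intro ω hω
      refine mem_iUnion.2 ⟨κ ω, hκ ω, fun hS => hω (mem_iUnion.2 ⟨κ ω, hS⟩)⟩
    exact measure_mono_null hsub (measure_iUnion_null fun k => hSnull k)
  · intro x hx y hy hxy
    obtain ⟨j, hxj⟩ := mem_iUnion.mp hx
    obtain ⟨k, hyk⟩ := mem_iUnion.mp hy
    have hxg : g x = f j x := hgA j x (hSsub j hxj)
    have hyg : g y = f k y := hgA k y (hSsub k hyk)
    have hx' : g x ∈ A' j := hxg ▸ hSmem j x hxj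
    have hy' : g y ∈ A' k := hyg ▸ hSmem k y hyk
    have hjk : j = k := by
      by_contra hne
      exact Set.disjoint_left.mp (hdisj' hne) hx' (hxy ▸ hy')
    subst hjk
    rw [hxg, hyg] at hxy
    exact hSinj j hxj hyk hxy
  · rintro k ω ⟨hωA, hωS⟩
    obtain ⟨j, hωj⟩ := mem_iUnion.mp hωS
    have : j = k := by
      by_contra hne
      exact Set.disjoint_left.mp (hdisj hne) (hSsub j hωj) hωA
    subst this
    rw [hgA j ω (hSsub j hωj)]
    exact hSmem j ω hωj

/-- If `(X,Y)` and `(X',Y')` have the same joint law on a nonatomic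
standard Borel probability space, then there is a sequence of essentially injective
measure-preserving maps `g_n` with `X'∘g_n → X` in `L^p` and `Y'∘g_n → Y` in `L^q`. -/
theorem stmt13 {Ω E F : Type*} [MeasurableSpace Ω] [StandardBorelSpace Ω]
    [NormedAddCommGroup E] [NormedSpace ℝ E] [CompleteSpace E]
    [SecondCountableTopology E] [MeasurableSpace E] [BorelSpace E]
    [NormedAddCommGroup F] [NormedSpace ℝ F] [CompleteSpace F]
    [SecondCountableTopology F] [MeasurableSpace F] [BorelSpace F]
    (ℙ : Measure Ω) [IsProbabilityMeasure ℙ] [NullSingletonClass ℙ]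
    (p q : ℝ) (hp : 1 ≤ p) (hq : 1 ≤ q)
    (X X' : Ω → E) (Y Y' : Ω → F)
    (hX : MemLp X (ENNReal.ofReal p) ℙ) (hX' : MemLp X' (ENNReal.ofReal p) ℙ)
    (hY : MemLp Y (ENNReal.ofReal q) ℙ) (hY' : MemLp Y' (ENNReal.ofReal q) ℙ)
    (hlaw : Measure.map (fun ω => (X ω, Y ω)) ℙ = Measure.map (fun ω => (X' ω, Y' ω)) ℙ) :
    ∃ g : ℕ → Ω → Ω,
      (∀ n, Measurable (g n) ∧ Measure.map (g n) ℙ = ℙ ∧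
        ∃ S : Set Ω, MeasurableSet S ∧ ℙ Sᶜ = 0 ∧ Set.InjOn (g n) S) ∧
      Tendsto (fun n => eLpNorm (fun ω => X' (g n ω) - X ω) (ENNReal.ofReal p) ℙ)
        atTop (𝓝 0) ∧
      Tendsto (fun n => eLpNorm (fun ω => Y' (g n ω) - Y ω) (ENNReal.ofReal q) ℙ)
        atTop (𝓝 0) := by
  classical
  haveI : Nonempty Ω := by
    rcases isEmpty_or_nonempty Ω with h | h
    · exfalso
      have h1 : ℙ univ = 1 := measure_univ
      rw [Set.univ_eq_empty_iff.mpr h, measure_empty] at h1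
      exact zero_ne_one h1
    · exact h
  -- measurable representatives
  set X₀ : Ω → E := hX.1.mk X with hX₀_def
  set X₀' : Ω → E := hX'.1.mk X' with hX₀'_def
  set Y₀ : Ω → F := hY.1.mk Y with hY₀_def
  set Y₀' : Ω → F := hY'.1.mk Y' with hY₀'_def
  have hX₀m : Measurable X₀ := hX.1.stronglyMeasurable_mk.measurable
  have hX₀'m : Measurable X₀' := hX'.1.stronglyMeasurable_mk.measurable
  have hY₀m : Measurable Y₀ := hY.1.stronglyMeasurable_mk.measurable
  have hY₀'m : Measurable Y₀' := hY'.1.stronglyMeasurable_mk.measurable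
  have hXae : X =ᵐ[ℙ] X₀ := hX.1.ae_eq_mk
  have hX'ae : X' =ᵐ[ℙ] X₀' := hX'.1.ae_eq_mk
  have hYae : Y =ᵐ[ℙ] Y₀ := hY.1.ae_eq_mk
  have hY'ae : Y' =ᵐ[ℙ] Y₀' := hY'.1.ae_eq_mk
  set Z : Ω → E × F := fun ω => (X₀ ω, Y₀ ω) with hZ_def
  set Z' : Ω → E × F := fun ω => (X₀' ω, Y₀' ω) with hZ'_def
  have hZm : Measurable Z := hX₀m.prodMk hY₀m
  have hZ'm : Measurable Z' := hX₀'m.prodMk hY₀'m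
  have hZlaw : ℙ.map Z = ℙ.map Z' := by
    have h1 : (fun ω => (X ω, Y ω)) =ᵐ[ℙ] Z := by
      filter_upwards [hXae, hYae] with ω h1 h2
      simp [hZ_def, h1, h2]
    have h2 : (fun ω => (X' ω, Y' ω)) =ᵐ[ℙ] Z' := by
      filter_upwards [hX'ae, hY'ae] with ω h1 h2
      simp [hZ'_def, h1, h2]
    rw [← Measure.map_congr h1, ← Measure.map_congr h2, hlaw]
  -- dense sequence in E × F
  set z : ℕ → E × F := TopologicalSpace.denseSeq (E × F) with hz_def
  have hz : DenseRange z := TopologicalSpace.denseRange_denseSeq (E × F)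
  -- main construction for each n
  have key : ∀ n : ℕ, ∃ g : Ω → Ω,
      (Measurable g ∧ Measure.map g ℙ = ℙ ∧
        ∃ S : Set Ω, MeasurableSet S ∧ ℙ Sᶜ = 0 ∧ Set.InjOn g S) ∧
      (∀ᵐ ω ∂ℙ, ‖X' (g ω) - X ω‖ ≤ 2 * ((n : ℝ) + 1)⁻¹) ∧
      (∀ᵐ ω ∂ℙ, ‖Y' (g ω) - Y ω‖ ≤ 2 * ((n : ℝ) + 1)⁻¹) := by
    intro n
    set ε : ℝ := ((n : ℝ) + 1)⁻¹ with hε_def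
    have hε : 0 < ε := by positivity
    set C : ℕ → Set (E × F) := fun k =>
      Metric.ball (z k) ε \ ⋃ (j : ℕ) (_ : j < k), Metric.ball (z j) ε with hC_def
    have hCmeas : ∀ k, MeasurableSet (C k) := fun k =>
      measurableSet_ball.diff
        (MeasurableSet.iUnion fun j => MeasurableSet.iUnion fun _ => measurableSet_ball)
    have hCball : ∀ k, C k ⊆ Metric.ball (z k) ε := fun k => diff_subset
    have hCdisj : Pairwise (Function.onFun Disjoint C) := by
      intro i j hne
      rcases hne.lt_or_gt with hij | hij
      · refine Set.disjoint_left.mpr fun x hxi hxj => ?_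
        exact hxj.2 (mem_iUnion.2 ⟨i, mem_iUnion.2 ⟨hij, hxi.1⟩⟩)
      · refine Set.disjoint_left.mpr fun x hxi hxj => ?_
        exact hxi.2 (mem_iUnion.2 ⟨j, mem_iUnion.2 ⟨hij, hxj.1⟩⟩)
    have hCcov : ⋃ k, C k = univ := by
      refine eq_univ_of_forall fun x => ?_
      have hex : ∃ k, x ∈ Metric.ball (z k) ε := by
        obtain ⟨k, hk⟩ := hz.exists_dist_lt x hε
        exact ⟨k, Metric.mem_ball.mpr hk⟩
      exact mem_iUnion.2 ⟨Nat.find hex, Nat.find_spec hex, fun hmem => by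
        obtain ⟨j, hj⟩ := mem_iUnion.mp hmem
        obtain ⟨hjlt, hjball⟩ := mem_iUnion.mp hj
        exact Nat.find_min hex hjlt hjball⟩
    set A : ℕ → Set Ω := fun k => Z ⁻¹' C k with hA_def
    set A' : ℕ → Set Ω := fun k => Z' ⁻¹' C k with hA'_def
    have hAmeas : ∀ k, MeasurableSet (A k) := fun k => hZm (hCmeas k)
    have hA'meas : ∀ k, MeasurableSet (A' k) := fun k => hZ'm (hCmeas k)
    have hAdisj : Pairwise (Function.onFun Disjoint A) := fun i j hne =>
      (hCdisj hne).preimage Z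
    have hA'disj : Pairwise (Function.onFun Disjoint A') := fun i j hne =>
      (hCdisj hne).preimage Z'
    have hAcov : ⋃ k, A k = univ := by
      rw [hA_def, ← preimage_iUnion, hCcov, preimage_univ]
    have hA'cov : ⋃ k, A' k = univ := by
      rw [hA'_def, ← preimage_iUnion, hCcov, preimage_univ]
    have hAA' : ∀ k, ℙ (A k) = ℙ (A' k) := by
      intro k
      have e1 : ℙ (A k) = (ℙ.map Z) (C k) := (Measure.map_apply hZm (hCmeas k)).symm
      have e2 : ℙ (A' k) = (ℙ.map Z') (C k) := (Measure.map_apply hZ'm (hCmeas k)).symm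
      rw [e1, e2, hZlaw]
    obtain ⟨g, hgmeas, hgmap, S, hSmeas, hSnull, hSinj, hSmem⟩ :=
      exists_glue ℙ A A' hAmeas hA'meas hAdisj hA'disj hAcov hA'cov hAA'
    refine ⟨g, ⟨hgmeas, hgmap, S, hSmeas, hSnull, hSinj⟩, ?_, ?_⟩
    -- a.e. bound
    all_goals {
      have hpull : ∀ {α : Type _} (W W₀ : Ω → α), W =ᵐ[ℙ] W₀ →
          (fun ω => W (g ω)) =ᵐ[ℙ] (fun ω => W₀ (g ω)) := by
        intro α W W₀ hW
        have hN : ℙ {ω | W ω ≠ W₀ ω} = 0 := hW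
        have hN2 : ℙ (g ⁻¹' (toMeasurable ℙ {ω | W ω ≠ W₀ ω})) = 0 := by
          rw [← Measure.map_apply hgmeas (measurableSet_toMeasurable _ _), hgmap,
            measure_toMeasurable]
          exact hN
        refine measure_mono_null ?_ hN2
        intro ω hω
        exact subset_toMeasurable ℙ _ hω
      have hbase : ∀ᵐ ω ∂ℙ, dist (Z ω) (Z' (g ω)) ≤ 2 * ε := by
        have hSae : ∀ᵐ ω ∂ℙ, ω ∈ S := by
          rw [ae_iff]
          exact hSnull
        filter_upwards [hSae] with ω hω
        have hcov : ω ∈ ⋃ k, A k := hAcov ▸ mem_univ ω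
        obtain ⟨k, hk⟩ := mem_iUnion.mp hcov
        have hg' : g ω ∈ A' k := hSmem k ω ⟨hk, hω⟩
        have h1 : dist (Z ω) (z k) < ε := Metric.mem_ball.mp (hCball k hk)
        have h2 : dist (Z' (g ω)) (z k) < ε := Metric.mem_ball.mp (hCball k hg')
        calc dist (Z ω) (Z' (g ω)) ≤ dist (Z ω) (z k) + dist (z k) (Z' (g ω)) :=
              dist_triangle _ _ _
          _ ≤ ε + ε := by
              rw [dist_comm (z k)]
              exact add_le_add h1.le h2.le
          _ = 2 * ε := by ring
      first
      | · -- X component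
          filter_upwards [hbase, hXae, hpull X' X₀' hX'ae] with ω h1 h2 h3
          rw [h2, h3]
          have : dist (X₀' (g ω)) (X₀ ω) ≤ dist (Z' (g ω)) (Z ω) := by
            rw [Prod.dist_eq]
            exact le_max_left _ _
          rw [← dist_eq_norm]
          calc dist (X₀' (g ω)) (X₀ ω) ≤ dist (Z' (g ω)) (Z ω) := this
            _ = dist (Z ω) (Z' (g ω)) := dist_comm _ _
            _ ≤ 2 * ε := h1
      | · -- Y component
          filter_upwards [hbase, hYae, hpull Y' Y₀' hY'ae] with ω h1 h2 h3
          rw [h2, h3]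
          have : dist (Y₀' (g ω)) (Y₀ ω) ≤ dist (Z' (g ω)) (Z ω) := by
            rw [Prod.dist_eq]
            exact le_max_right _ _
          rw [← dist_eq_norm]
          calc dist (Y₀' (g ω)) (Y₀ ω) ≤ dist (Z' (g ω)) (Z ω) := this
            _ = dist (Z ω) (Z' (g ω)) := dist_comm _ _
            _ ≤ 2 * ε := h1
    }
  choose g hg hbX hbY using key
  have hupper : Tendsto (fun n : ℕ => ENNReal.ofReal (2 * ((n : ℝ) + 1)⁻¹)) atTop (𝓝 0) := by
    have h1 : Tendsto (fun n : ℕ => 2 * ((n : ℝ) + 1)⁻¹) atTop (𝓝 0) := by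
      have := tendsto_one_div_add_atTop_nhds_zero_nat.const_mul (2 : ℝ)
      simpa [one_div, mul_zero] using this
    have := ENNReal.tendsto_ofReal h1
    simpa using this
  refine ⟨g, fun n => hg n, ?_, ?_⟩
  · refine tendsto_of_tendsto_of_tendsto_of_le_of_le tendsto_const_nhds hupper
      (fun n => zero_le) (fun n => ?_)
    have := eLpNorm_le_of_ae_bound (p := ENNReal.ofReal p) (μ := ℙ) (hbX n)
    rwa [measure_univ, ENNReal.one_rpow, one_mul] at this
  · refine tendsto_of_tendsto_of_tendsto_of_le_of_le tendsto_const_nhds hupper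
      (fun n => zero_le) (fun n => ?_)
    have := eLpNorm_le_of_ae_bound (p := ENNReal.ofReal q) (μ := ℙ) (hbY n)
    rwa [measure_univ, ENNReal.one_rpow, one_mul] at this
end

section
/- In the setting of the representation theorem for invariant Lipschitz maps (same data): if two maps f₁, f₂ : S[𝖸, ι(D(L))] → 𝖹 are such that fᵢ(·,μ) is continuous on supp μ for every μ ∈ ι(D(L)), and for every X ∈ D(L) one has L X(ω) = fᵢ(X(ω), X♯ℙ) for a.e. ω (i = 1,2), then f₁ = f₂. -/
open MeasureTheory

/-- The topological support of a measure: points all of whose open neighbourhoods have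
positive measure. -/
def msupport {E : Type*} [TopologicalSpace E] [MeasurableSpace E] (μ : Measure E) :
    Set E :=
  {x | ∀ U : Set E, IsOpen U → x ∈ U → 0 < μ U}

lemma msupport_compl_null {E : Type*} [TopologicalSpace E] [MeasurableSpace E]
    [SecondCountableTopology E] (μ : Measure E) : μ (msupport μ)ᶜ = 0 := by
  obtain ⟨b, hbc, -, hb⟩ := TopologicalSpace.exists_countable_basis E
  have hsub : (msupport μ)ᶜ ⊆ ⋃₀ {s ∈ b | μ s = 0} := by
    intro x hx
    simp only [msupport, Set.mem_compl_iff, Set.mem_setOf_eq, not_forall] at hx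
    obtain ⟨U, hU, hxU, hμU⟩ := hx
    push_neg at hμU
    have hμU0 : μ U = 0 := le_antisymm hμU bot_le
    obtain ⟨s, hsb, hxs, hsU⟩ := hb.exists_subset_of_mem_open hxU hU
    exact ⟨s, ⟨hsb, le_antisymm ((measure_mono hsU).trans hμU0.le) bot_le⟩, hxs⟩
  refine le_antisymm ((measure_mono hsub).trans ?_) bot_le
  exact le_of_eq ((measure_sUnion_null_iff (hbc.mono (Set.sep_subset _ _))).mpr
    fun s hs => hs.2)

/-- uniqueness of the representing map. If `f₁, f₂` are defined on
`S[Y, ι(D(L))]`, have continuous sections `fᵢ(·,μ)` on `supp μ`, and both represent the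
operator `L` via `L X(ω) = fᵢ(X(ω), X♯ℙ)` a.e., then `f₁ = f₂` on `S[Y, ι(D(L))]`. -/
theorem stmt18 {Ω Y Z : Type*} [MeasurableSpace Ω] [StandardBorelSpace Ω]
    [NormedAddCommGroup Y] [NormedSpace ℝ Y] [CompleteSpace Y]
    [SecondCountableTopology Y] [MeasurableSpace Y] [BorelSpace Y]
    [NormedAddCommGroup Z] [NormedSpace ℝ Z] [CompleteSpace Z]
    [SecondCountableTopology Z]
    (ℙ : Measure Ω) [IsProbabilityMeasure ℙ] [NullSingletonClass ℙ]
    (DL : Set (Ω → Y)) (T : (Ω → Y) → (Ω → Z))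
    (hmeas : ∀ X ∈ DL, Measurable X)
    (f₁ f₂ : Y × Measure Y → Z)
    (hc₁ : ∀ μ ∈ (fun X : Ω → Y => Measure.map X ℙ) '' DL,
      ContinuousOn (fun x => f₁ (x, μ)) (msupport μ))
    (hc₂ : ∀ μ ∈ (fun X : Ω → Y => Measure.map X ℙ) '' DL,
      ContinuousOn (fun x => f₂ (x, μ)) (msupport μ))
    (hr₁ : ∀ X ∈ DL, ∀ᵐ ω ∂ℙ, T X ω = f₁ (X ω, Measure.map X ℙ))
    (hr₂ : ∀ X ∈ DL, ∀ᵐ ω ∂ℙ, T X ω = f₂ (X ω, Measure.map X ℙ)) :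
    ∀ (x : Y) (μ : Measure Y), μ ∈ (fun X : Ω → Y => Measure.map X ℙ) '' DL →
      x ∈ msupport μ → f₁ (x, μ) = f₂ (x, μ) := by
  intro x μ hμ hx
  obtain ⟨X, hXD, rfl⟩ := hμ
  set μ := Measure.map X ℙ with hμdef
  by_contra hne
  have hXm := hmeas X hXD
  -- a.e. ω, f₁ (X ω, μ) = f₂ (X ω, μ) and X ω ∈ msupport μ
  have hae : ∀ᵐ ω ∂ℙ, f₁ (X ω, μ) = f₂ (X ω, μ) ∧ X ω ∈ msupport μ := by
    have h3 : ∀ᵐ ω ∂ℙ, X ω ∈ msupport μ := by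
      have : ℙ (X ⁻¹' (msupport μ)ᶜ) = 0 := by
        have hmeasset : MeasurableSet (msupport μ)ᶜ := by
          have : IsOpen (msupport μ)ᶜ := by
            rw [isOpen_iff_mem_nhds]
            intro y hy
            simp only [msupport, Set.mem_compl_iff, Set.mem_setOf_eq, not_forall] at hy
            obtain ⟨U, hU, hyU, hμU⟩ := hy
            push_neg at hμU
            refine Filter.mem_of_superset (hU.mem_nhds hyU) ?_
            intro z hz hzsupp
            exact absurd (hzsupp U hU hz) (by simpa using hμU)
          exact this.measurableSet
        have := msupport_compl_null μ
        rwa [hμdef, Measure.map_apply hXm hmeasset] at this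
      exact this
    filter_upwards [hr₁ X hXD, hr₂ X hXD, h3] with ω h1 h2 h3
    exact ⟨h1 ▸ h2, h3⟩
  -- find open U around x where f₁ ≠ f₂ on supp
  have hε : 0 < dist (f₁ (x, μ)) (f₂ (x, μ)) := dist_pos.mpr hne
  set ε := dist (f₁ (x, μ)) (f₂ (x, μ)) with hεdef
  have h1 := (hc₁ μ ⟨X, hXD, rfl⟩ x hx)
  have h2 := (hc₂ μ ⟨X, hXD, rfl⟩ x hx)
  have h1' := Metric.continuousWithinAt_iff.mp h1 (ε/2) (by positivity)
  have h2' := Metric.continuousWithinAt_iff.mp h2 (ε/2) (by positivity)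
  obtain ⟨δ₁, hδ₁, H1⟩ := h1'
  obtain ⟨δ₂, hδ₂, H2⟩ := h2'
  set δ := min δ₁ δ₂ with hδdef
  have hδ : 0 < δ := lt_min hδ₁ hδ₂
  -- the ball around x has positive μ-measure
  have hball : 0 < μ (Metric.ball x δ) := hx _ Metric.isOpen_ball (Metric.mem_ball_self hδ)
  have hballP : 0 < ℙ (X ⁻¹' Metric.ball x δ) := by
    rwa [hμdef, Measure.map_apply hXm measurableSet_ball] at hball
  -- the a.e. set must intersect the preimage of the ball
  have hint : ∃ ω, X ω ∈ Metric.ball x δ ∧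
      (f₁ (X ω, μ) = f₂ (X ω, μ) ∧ X ω ∈ msupport μ) := by
    by_contra hcon
    push_neg at hcon
    have : X ⁻¹' Metric.ball x δ ⊆ {ω | ¬ (f₁ (X ω, μ) = f₂ (X ω, μ) ∧ X ω ∈ msupport μ)} :=
      fun ω hω h => hcon ω hω h.1 h.2
    have h0 : ℙ {ω | ¬ (f₁ (X ω, μ) = f₂ (X ω, μ) ∧ X ω ∈ msupport μ)} = 0 := hae
    exact absurd (le_antisymm ((measure_mono this).trans h0.le) bot_le) hballP.ne'
  obtain ⟨ω, hωb, hωeq, hωs⟩ := hint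
  have hd : dist (X ω) x < δ := Metric.mem_ball.mp hωb
  have e1 : dist (f₁ (X ω, μ)) (f₁ (x, μ)) < ε/2 :=
    H1 hωs (lt_of_lt_of_le hd (min_le_left _ _))
  have e2 : dist (f₂ (X ω, μ)) (f₂ (x, μ)) < ε/2 :=
    H2 hωs (lt_of_lt_of_le hd (min_le_right _ _))
  have : ε ≤ dist (f₁ (X ω, μ)) (f₁ (x, μ)) + dist (f₂ (X ω, μ)) (f₂ (x, μ)) := by
    calc ε = dist (f₁ (x, μ)) (f₂ (x, μ)) := hεdef
    _ ≤ dist (f₁ (x, μ)) (f₁ (X ω, μ)) + dist (f₁ (X ω, μ)) (f₂ (x, μ)) := dist_triangle _ _ _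
    _ = dist (f₁ (X ω, μ)) (f₁ (x, μ)) + dist (f₂ (X ω, μ)) (f₂ (x, μ)) := by
        rw [dist_comm (f₁ (x, μ)), hωeq]
  linarith
end
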